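/- arXiv:2012.12174 — 3 statements merged into one kernel-verified Lean document; each statement's English description precedes it below -/
import Mathlib

section
/- Let p ≥ 1 and let X be a real random variable with density f and E[|X|^p] = μ^p with μ > 0. Then the differential entropy satisfies h(X) ≤ log₂(2 Γ((p+1)/p) (p e)^{1/p} μ). -/
open MeasureTheory Real Set

lemma integrableOn_exp_neg_rpow_Ioi {p : ℝ} (hp : 1 ≤ p) :
    IntegrableOn (fun x : ℝ => Real.exp (-|x| ^ p)) (Ioi 0) := by
  have h := integrableOn_rpow_mul_exp_neg_rpow (p := p) (s := 0) neg_one_lt_zero (lt_of_lt_of_le one_pos hp)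
  simp_rw [Real.rpow_zero, one_mul] at h
  refine h.congr_fun (fun x hx => ?_) measurableSet_Ioi
  rw [abs_of_pos (mem_Ioi.mp hx)]

lemma integrable_exp_neg_abs_rpow {p : ℝ} (hp : 1 ≤ p) :
    Integrable (fun x : ℝ => Real.exp (-|x| ^ p)) := by
  have hIoi := integrableOn_exp_neg_rpow_Ioi hp
  have hIic : IntegrableOn (fun x : ℝ => Real.exp (-|x| ^ p)) (Iic 0) := by
    rw [← Measure.map_neg_eq_self (volume : Measure ℝ)]
    have m : MeasurableEmbedding fun x : ℝ => -x :=
      (Homeomorph.neg ℝ).measurableEmbedding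
    rw [m.integrableOn_map_iff]
    simp_rw [Function.comp_def, abs_neg, neg_preimage, neg_Iic, neg_zero]
    exact Iff.mpr integrableOn_Ici_iff_integrableOn_Ioi hIoi
  have := hIic.union hIoi
  rwa [Iic_union_Ioi, integrableOn_univ] at this

/-- Maximum-entropy bound under an `L^p`-moment constraint: if `X` has density `f` with
`E[|X|^p] = μ^p`, then `h(X) ≤ log₂ (2 Γ((p+1)/p) (p e)^{1/p} μ)` (entropy in bits). -/
theorem max_entropy_Lp_constraint (p μ : ℝ) (hp : 1 ≤ p) (hμ : 0 < μ)
    (f : ℝ → ℝ) (hf : Measurable f) (hnn : ∀ x, 0 ≤ f x)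
    (hone : ∫ x : ℝ, f x = 1)
    (hmom_int : Integrable (fun x : ℝ => |x| ^ p * f x))
    (hmom : ∫ x : ℝ, |x| ^ p * f x = μ ^ p)
    (hent_int : Integrable (fun x : ℝ => f x * Real.logb 2 (f x))) :
    -∫ x : ℝ, f x * Real.logb 2 (f x)
      ≤ Real.logb 2 (2 * Real.Gamma ((p + 1) / p) * (p * Real.exp 1) ^ (1 / p) * μ) := by
  have hp0 : (0:ℝ) < p := lt_of_lt_of_le one_pos hp
  have hμp : (0:ℝ) < μ ^ p := Real.rpow_pos_of_pos hμ p
  set c : ℝ := p * μ ^ p with hc_def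
  have hc0 : (0:ℝ) < c := mul_pos hp0 hμp
  set r : ℝ := c ^ (1/p) with hr_def
  have hr0 : (0:ℝ) < r := Real.rpow_pos_of_pos hc0 _
  have hrp : r ^ p = c := by
    rw [hr_def, ← Real.rpow_mul hc0.le, one_div, inv_mul_cancel₀ hp0.ne', Real.rpow_one]
  set Z : ℝ := 2 * Real.Gamma ((p + 1) / p) * p ^ (1/p) * μ with hZ_def
  have hGamma : (0:ℝ) < Real.Gamma ((p + 1) / p) :=
    Real.Gamma_pos_of_pos (div_pos (by linarith) hp0)
  have hZ0 : (0:ℝ) < Z := by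
    have : (0:ℝ) < p ^ (1/p) := Real.rpow_pos_of_pos hp0 _
    positivity
  -- the generalized Gaussian density
  set g : ℝ → ℝ := fun x => Real.exp (-|x| ^ p / c) / Z with hg_def
  have hg_pos : ∀ x, 0 < g x := fun x => div_pos (Real.exp_pos _) hZ0
  -- rewrite g as a rescaling
  have hg_eq : ∀ x : ℝ, g x = (fun y => Real.exp (-|y| ^ p) / Z) (x / r) := by
    intro x
    simp only [hg_def]
    congr 2
    rw [abs_div, abs_of_pos hr0, Real.div_rpow (abs_nonneg x) hr0.le, hrp, neg_div]
  have he0_int : Integrable (fun y : ℝ => Real.exp (-|y| ^ p) / Z) :=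
    (integrable_exp_neg_abs_rpow hp).div_const Z
  have hg_int : Integrable g := by
    have := (integrable_comp_div_iff
      (fun y : ℝ => Real.exp (-|y| ^ p) / Z) hr0.ne').mpr he0_int
    exact this.congr (by filter_upwards with x using (hg_eq x).symm)
  -- value of ∫ g
  have hZr : Z = 2 * Real.Gamma (1/p + 1) * r := by
    have h1 : r = p ^ (1/p) * μ := by
      rw [hr_def, hc_def, Real.mul_rpow hp0.le hμp.le, ← Real.rpow_mul hμ.le,
        mul_one_div, div_self hp0.ne', Real.rpow_one]
    have h2 : (p + 1) / p = 1/p + 1 := by field_simp; ring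
    rw [hZ_def, h1, h2]; ring
  have hg_one : ∫ x : ℝ, g x = 1 := by
    have h1 : ∫ x : ℝ, g x = ∫ x : ℝ, (fun y => Real.exp (-|y| ^ p) / Z) (x / r) := by
      exact integral_congr_ae (by filter_upwards with x using hg_eq x)
    rw [h1, Measure.integral_comp_div (fun y : ℝ => Real.exp (-|y| ^ p) / Z) r]
    rw [integral_div, integral_comp_abs (f := fun x => Real.exp (-x ^ p)),
      integral_exp_neg_rpow hp0]
    rw [abs_of_pos hr0, smul_eq_mul, hZr]
    field_simp
  -- f is integrable
  have hf_int : Integrable f := by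
    by_contra h
    rw [integral_undef h] at hone
    exact one_ne_zero hone.symm
  -- f * log f is integrable
  have hlog2 : Real.log 2 ≠ 0 := (Real.log_pos one_lt_two).ne'
  have hflogf_int : Integrable (fun x => f x * Real.log (f x)) := by
    have := hent_int.const_mul (Real.log 2)
    refine this.congr (Filter.Eventually.of_forall fun x => ?_)
    simp only [← Real.log_div_log]
    field_simp
  -- f * log g is integrable and its integral
  have hL_eq : ∀ x, f x * Real.log (g x)
      = (-(1/c)) * (|x| ^ p * f x) + (-Real.log Z) * f x := by
    intro x
    rw [hg_def]
    rw [Real.log_div (Real.exp_ne_zero _) hZ0.ne', Real.log_exp]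
    field_simp
    ring
  have hL_int : Integrable (fun x => f x * Real.log (g x)) := by
    refine ((hmom_int.const_mul (-(1/c))).add (hf_int.const_mul (-Real.log Z))).congr ?_
    filter_upwards with x using (hL_eq x).symm
  have hL_val : ∫ x, f x * Real.log (g x) = -(1/p) - Real.log Z := by
    have : ∫ x, f x * Real.log (g x)
        = ∫ x, ((-(1/c)) * (|x| ^ p * f x) + (-Real.log Z) * f x) :=
      integral_congr_ae (by filter_upwards with x using hL_eq x)
    rw [this, integral_add (hmom_int.const_mul _) (hf_int.const_mul _),
      integral_const_mul, integral_const_mul, hmom, hone, hc_def]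
    field_simp
    ring
  -- Gibbs inequality
  have gibbs : ∫ x, f x * Real.log (g x) ≤ ∫ x, f x * Real.log (f x) := by
    have key : ∫ x, (f x * Real.log (g x) - f x * Real.log (f x))
        ≤ ∫ x, (g x - f x) := by
      refine integral_mono (hL_int.sub hflogf_int) (hg_int.sub hf_int) (fun x => ?_)
      rcases eq_or_lt_of_le (hnn x) with h0 | h0
      · simp only [← h0, zero_mul, sub_zero, sub_self]
        exact (hg_pos x).le
      · have hlog := Real.log_le_sub_one_of_pos (div_pos (hg_pos x) h0)
        have h1 : f x * Real.log (g x / f x) ≤ f x * (g x / f x - 1) :=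
          mul_le_mul_of_nonneg_left hlog h0.le
        rw [Real.log_div (hg_pos x).ne' h0.ne'] at h1
        have h2 : f x * (g x / f x - 1) = g x - f x := by field_simp
        rw [h2] at h1
        calc f x * Real.log (g x) - f x * Real.log (f x)
            = f x * (Real.log (g x) - Real.log (f x)) := by ring
          _ ≤ g x - f x := h1
    rw [integral_sub hL_int hflogf_int, integral_sub hg_int hf_int, hg_one, hone] at key
    linarith
  -- conclude
  have hI : -(1/p) - Real.log Z ≤ ∫ x, f x * Real.log (f x) := hL_val ▸ gibbs
  have hent_eq : ∫ x : ℝ, f x * Real.logb 2 (f x)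
      = (∫ x, f x * Real.log (f x)) / Real.log 2 := by
    rw [← integral_div]
    refine integral_congr_ae (Filter.Eventually.of_forall fun x => ?_)
    simp only [← Real.log_div_log, mul_div_assoc]
  have hT : 2 * Real.Gamma ((p + 1) / p) * (p * Real.exp 1) ^ (1/p) * μ
      = Z * Real.exp (1/p) := by
    rw [hZ_def, Real.mul_rpow hp0.le (Real.exp_pos 1).le, Real.exp_one_rpow]
    ring
  rw [hent_eq, hT, ← Real.log_div_log, Real.log_mul hZ0.ne' (Real.exp_ne_zero _), Real.log_exp]
  have hlog2pos : (0:ℝ) < Real.log 2 := Real.log_pos one_lt_two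
  rw [← neg_div]
  gcongr
  linarith
end

section
/- Let p ≥ 1 and let X be a real random variable with density f. Then E[|X|^p]^{1/p} ≥ 2^{h(X)} / (2 Γ((p+1)/p) (p e)^{1/p}), where h(X) is the differential entropy of X in bits (assumed finite). -/
open MeasureTheory Real

private lemma myIntegrable_comp_abs {f : ℝ → ℝ} (hf : IntegrableOn f (Set.Ioi 0)) :
    Integrable fun x => f |x| := by
  have h1 : IntegrableOn (fun x => f |x|) (Set.Ioi 0) :=
    hf.congr_fun (fun x hx => by rw [abs_of_pos hx]) measurableSet_Ioi
  have h2 : IntegrableOn (fun x => f |x|) (Set.Iic 0) := by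
    rw [← Measure.map_neg_eq_self (volume : Measure ℝ)]
    have m : MeasurableEmbedding fun x : ℝ => -x := (Homeomorph.neg ℝ).measurableEmbedding
    rw [m.integrableOn_map_iff]
    simp_rw [Function.comp_def, abs_neg, Set.neg_preimage, Set.neg_Iic, neg_zero]
    exact Iff.mpr integrableOn_Ici_iff_integrableOn_Ioi h1
  rw [← integrableOn_univ, ← Set.Iic_union_Ioi (a := (0:ℝ))]
  exact h2.union h1

/-- Entropy lower bound on the `L^p` norm: if `X` has density `f` with finite differential
entropy `h(X)` (in bits), then `E[|X|^p]^{1/p} ≥ 2^{h(X)} / (2 Γ((p+1)/p) (p e)^{1/p})`. -/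
theorem Lp_norm_entropy_lower_bound (p : ℝ) (hp : 1 ≤ p)
    (f : ℝ → ℝ) (hf : Measurable f) (hnn : ∀ x, 0 ≤ f x)
    (hone : ∫ x : ℝ, f x = 1)
    (hent_int : Integrable (fun x : ℝ => f x * Real.logb 2 (f x)))
    (hmom_int : Integrable (fun x : ℝ => |x| ^ p * f x)) :
    (∫ x : ℝ, |x| ^ p * f x) ^ (1 / p)
      ≥ (2 : ℝ) ^ (-∫ x : ℝ, f x * Real.logb 2 (f x)) /
        (2 * Real.Gamma ((p + 1) / p) * (p * Real.exp 1) ^ (1 / p)) := by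
  have hp0 : 0 < p := lt_of_lt_of_le one_pos hp
  have hfi : Integrable f := by
    by_contra h
    rw [integral_undef h] at hone; norm_num at hone
  obtain ⟨m, hm_def⟩ : ∃ m : ℝ, ∫ x : ℝ, |x| ^ p * f x = m := ⟨_, rfl⟩
  rw [hm_def]
  have hnnI : ∀ x : ℝ, 0 ≤ |x| ^ p * f x := fun x =>
    mul_nonneg (rpow_nonneg (abs_nonneg x) p) (hnn x)
  have hm0 : 0 ≤ m := hm_def ▸ integral_nonneg hnnI
  have hm : 0 < m := by
    rcases hm0.lt_or_eq with h | h
    · exact h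
    · exfalso
      have hz : (fun x : ℝ => |x| ^ p * f x) =ᵐ[volume] 0 :=
        (integral_eq_zero_iff_of_nonneg hnnI hmom_int).mp (hm_def.trans h.symm)
      have hne : ∀ᵐ x : ℝ, x ≠ 0 := by
        refine (ae_iff).mpr ?_
        simpa using measure_singleton (0 : ℝ)
      have hf0 : f =ᵐ[volume] 0 := by
        filter_upwards [hz, hne] with x h1 h2
        have hxp : 0 < |x| ^ p := rpow_pos_of_pos (abs_pos.mpr h2) p
        simpa using (mul_eq_zero.mp h1).resolve_left (ne_of_gt hxp)
      have h0 : ∫ x : ℝ, f x = 0 := by rw [integral_congr_ae hf0]; simp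
      rw [h0] at hone; norm_num at hone
  obtain ⟨b, hb_def⟩ : ∃ b : ℝ, b = (p * m)⁻¹ := ⟨_, rfl⟩
  have hb : 0 < b := by rw [hb_def]; positivity
  obtain ⟨g, hg_def⟩ : ∃ g : ℝ → ℝ, g = fun x => Real.exp (-b * |x| ^ p) := ⟨_, rfl⟩
  have hgpos : ∀ x, 0 < g x := fun x => by rw [hg_def]; exact Real.exp_pos _
  have hgint : Integrable g := by
    rw [hg_def]
    apply myIntegrable_comp_abs (f := fun x => Real.exp (-b * x ^ p))
    exact (integrableOn_rpow_mul_exp_neg_mul_rpow neg_one_lt_zero hp0 hb).congr_fun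
      (fun x hx => by beta_reduce; rw [rpow_zero, one_mul]) measurableSet_Ioi
  obtain ⟨I, hI_def⟩ : ∃ I : ℝ, I = ∫ x : ℝ, g x := ⟨_, rfl⟩
  have hIval : I = 2 * (b ^ (-1 / p) * Real.Gamma (1 / p + 1)) := by
    rw [hI_def, hg_def, integral_comp_abs (f := fun x => Real.exp (-b * x ^ p)),
      integral_exp_neg_mul_rpow hp0 hb]
  have hGam : 0 < Real.Gamma (1 / p + 1) := Real.Gamma_pos_of_pos (by positivity)
  have hIpos : 0 < I := by rw [hIval]; positivity
  have hlog2 : Real.log 2 ≠ 0 := ne_of_gt (Real.log_pos one_lt_two)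
  have hA : Integrable (fun x : ℝ => f x * Real.log (f x)) := by
    have h := hent_int.mul_const (Real.log 2)
    refine h.congr (ae_of_all _ fun x => ?_)
    show f x * Real.logb 2 (f x) * Real.log 2 = f x * Real.log (f x)
    rw [← Real.log_div_log]
    field_simp
  have hD : Integrable (fun x : ℝ => f x * (-b * |x| ^ p - Real.log I)) :=
    ((hfi.const_mul (-(Real.log I))).add (hmom_int.const_mul (-b))).congr
      (ae_of_all _ fun x => by simp only [Pi.add_apply]; ring)
  have hpt : ∀ x : ℝ, f x - g x / I ≤
      f x * Real.log (f x) - f x * (-b * |x| ^ p - Real.log I) := by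
    intro x
    have hgx : 0 < g x := hgpos x
    rcases (hnn x).lt_or_eq with hfx | hfx
    · have hlgI : Real.log (g x / I) = -b * |x| ^ p - Real.log I := by
        rw [Real.log_div (ne_of_gt hgx) (ne_of_gt hIpos), hg_def, Real.log_exp]
      have ht : 0 < g x / I / f x := by positivity
      have hlt := Real.log_le_sub_one_of_pos ht
      have hld : Real.log (g x / I / f x) = Real.log (g x / I) - Real.log (f x) :=
        Real.log_div (by positivity) (ne_of_gt hfx)
      have hmul : f x * (g x / I / f x) = g x / I := by field_simp
      nlinarith [mul_le_mul_of_nonneg_left hlt (le_of_lt hfx)]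
    · rw [← hfx]
      simp only [zero_mul, mul_zero, sub_zero, zero_sub, Real.log_zero, sub_self]
      have : 0 ≤ g x / I := by positivity
      linarith
  have hgibbs : ∫ x : ℝ, (f x - g x / I) ≤
      ∫ x : ℝ, (f x * Real.log (f x) - f x * (-b * |x| ^ p - Real.log I)) :=
    integral_mono (hfi.sub (hgint.div_const I)) (hA.sub hD) hpt
  have h1 : ∫ x : ℝ, (f x - g x / I) = 0 := by
    rw [integral_sub hfi (hgint.div_const I), hone, integral_div, ← hI_def,
      div_self (ne_of_gt hIpos)]
    ring
  have h2 : ∫ x : ℝ, f x * (-b * |x| ^ p - Real.log I) = -(1 / p) - Real.log I := by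
    have he : (fun x : ℝ => f x * (-b * |x| ^ p - Real.log I))
        = fun x : ℝ => (-(Real.log I)) * f x + (-b) * (|x| ^ p * f x) := by
      funext x; ring
    rw [he, integral_add (hfi.const_mul (-(Real.log I))) (hmom_int.const_mul (-b)),
      integral_const_mul, integral_const_mul, hone, hm_def]
    have hbm : b * m = 1 / p := by
      rw [hb_def]
      field_simp
    linarith [hbm]
  rw [h1, integral_sub hA hD, h2] at hgibbs
  have hkey : -(1 / p) - Real.log I ≤ ∫ x : ℝ, f x * Real.log (f x) := by linarith
  have hS : ∫ x : ℝ, f x * Real.logb 2 (f x)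
      = (∫ x : ℝ, f x * Real.log (f x)) / Real.log 2 := by
    rw [← integral_div]
    congr 1; funext x; rw [← Real.log_div_log]; ring
  have hpp : (p + 1) / p = 1 / p + 1 := by field_simp; ring
  have hC : 0 < 2 * Real.Gamma ((p + 1) / p) * (p * Real.exp 1) ^ (1 / p) := by
    rw [hpp]; positivity
  rw [ge_iff_le, div_le_iff₀ hC]
  have h2S : (2 : ℝ) ^ (-∫ x : ℝ, f x * Real.logb 2 (f x))
      = Real.exp (-(∫ x : ℝ, f x * Real.log (f x))) := by
    rw [Real.rpow_def_of_pos two_pos, hS]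
    congr 1
    field_simp
  rw [h2S]
  have step1 : Real.exp (-(∫ x : ℝ, f x * Real.log (f x)))
      ≤ Real.exp (1 / p + Real.log I) := by
    apply Real.exp_le_exp.mpr; linarith
  refine step1.trans (le_of_eq ?_)
  rw [Real.exp_add, Real.exp_log hIpos, hIval]
  have hbr : b ^ (-1 / p : ℝ) = (p * m) ^ (1 / p : ℝ) := by
    rw [hb_def, Real.inv_rpow (by positivity), ← Real.rpow_neg (by positivity)]
    congr 1
    ring
  rw [hbr, Real.mul_rpow hp0.le hm.le, hpp, Real.mul_rpow hp0.le (Real.exp_pos 1).le,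
    Real.exp_one_rpow]
  ring
end

section
/- For fixed μ > 0 and x ∈ ℝ with |x| < μ, lim_{p→∞} exp(-|x|^p/(p μ^p)) / (2 Γ((p+1)/p) p^{1/p} μ) = 1/(2μ); and for |x| > μ the limit is 0. -/
open Real Filter

/-- Pointwise convergence of the generalized Gaussian density with `L^p` norm `μ` to the
uniform density on `[-μ, μ]` as `p → ∞`: the limit is `1/(2μ)` for `|x| < μ` and `0`
for `|x| > μ`. -/
theorem generalized_gaussian_tendsto_uniform (μ : ℝ) (hμ : 0 < μ) (x : ℝ) :
    (|x| < μ →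
      Tendsto
        (fun p : ℝ => Real.exp (-(|x| ^ p) / (p * μ ^ p)) /
          (2 * Real.Gamma ((p + 1) / p) * p ^ (1 / p) * μ))
        atTop (nhds (1 / (2 * μ)))) ∧
    (|x| > μ →
      Tendsto
        (fun p : ℝ => Real.exp (-(|x| ^ p) / (p * μ ^ p)) /
          (2 * Real.Gamma ((p + 1) / p) * p ^ (1 / p) * μ))
        atTop (nhds 0)) := by
  -- denominator tends to 2μ
  have hfrac : Tendsto (fun p : ℝ => (p + 1) / p) atTop (nhds 1) := by
    have h0 : Tendsto (fun p : ℝ => 1 + p⁻¹) atTop (nhds (1 + 0)) :=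
      tendsto_const_nhds.add tendsto_inv_atTop_zero
    rw [add_zero] at h0
    refine h0.congr' ?_
    filter_upwards [eventually_gt_atTop 0] with p hp
    field_simp
  have hGamma : Tendsto (fun p : ℝ => Real.Gamma ((p + 1) / p)) atTop (nhds 1) := by
    have hc : ContinuousAt Real.Gamma 1 := by
      refine (Real.differentiableAt_Gamma fun m => ?_).continuousAt
      have : (0:ℝ) ≤ m := Nat.cast_nonneg m
      intro h; linarith
    have := hc.tendsto.comp hfrac
    simpa [Function.comp_def] using this
  have hrpow : Tendsto (fun p : ℝ => p ^ (1 / p : ℝ)) atTop (nhds 1) := tendsto_rpow_div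
  have hden : Tendsto (fun p : ℝ => 2 * Real.Gamma ((p + 1) / p) * p ^ (1 / p : ℝ) * μ)
      atTop (nhds (2 * μ)) := by
    have : Tendsto (fun p : ℝ => 2 * Real.Gamma ((p + 1) / p) * p ^ (1 / p : ℝ) * μ)
        atTop (nhds (2 * 1 * 1 * μ)) :=
      ((tendsto_const_nhds.mul hGamma).mul hrpow).mul tendsto_const_nhds
    simpa using this
  -- rewrite numerator argument eventually
  have hargeq : ∀ᶠ p : ℝ in atTop,
      -(|x| ^ p) / (p * μ ^ p) = -((|x| / μ) ^ p / p) := by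
    filter_upwards [eventually_gt_atTop 0] with p hp
    rw [Real.div_rpow (abs_nonneg x) hμ.le]
    ring_nf
  constructor
  · intro hx
    have hr0 : (0:ℝ) ≤ |x| / μ := div_nonneg (abs_nonneg x) hμ.le
    have hr1 : |x| / μ < 1 := (div_lt_one hμ).mpr hx
    have h1 : Tendsto (fun p : ℝ => (|x| / μ) ^ p) atTop (nhds 0) :=
      tendsto_rpow_atTop_of_base_lt_one _ (by linarith) hr1
    have h2 : Tendsto (fun p : ℝ => (|x| / μ) ^ p / p) atTop (nhds 0) := by
      have := h1.div_atTop tendsto_id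
      simpa using this
    have hnum : Tendsto (fun p : ℝ => Real.exp (-(|x| ^ p) / (p * μ ^ p))) atTop (nhds 1) := by
      have : Tendsto (fun p : ℝ => Real.exp (-((|x| / μ) ^ p / p))) atTop (nhds 1) := by
        have := (Real.continuous_exp.tendsto 0).comp (by simpa using h2.neg :
          Tendsto (fun p : ℝ => -((|x| / μ) ^ p / p)) atTop (nhds 0))
        simpa [Function.comp_def] using this
      have heq : (fun p : ℝ => Real.exp (-(|x| ^ p) / (p * μ ^ p))) =ᶠ[atTop]
          (fun p : ℝ => Real.exp (-((|x| / μ) ^ p / p))) :=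
        hargeq.mono fun p hp => by simp only [hp]
      exact this.congr' heq.symm
    have := hnum.div hden (by positivity)
    simpa [Pi.div_def] using this
  · intro hx
    have hr1 : 1 < |x| / μ := (one_lt_div hμ).mpr hx
    have hlog : 0 < Real.log (|x| / μ) := Real.log_pos hr1
    have hA : Tendsto (fun p : ℝ => (|x| / μ) ^ p / p) atTop atTop := by
      have h1 : Tendsto (fun p : ℝ => Real.exp (p * Real.log (|x|/μ)) / (p * Real.log (|x|/μ)))
          atTop atTop := by
        have := (tendsto_exp_div_rpow_atTop 1).comp
          (tendsto_atTop_atTop_of_monotone (fun a b hab => by nlinarith [hlog.le] : Monotone fun p : ℝ => p * Real.log (|x|/μ)) (fun b => ⟨b / Real.log (|x|/μ) + 1, by nlinarith [mul_div_cancel₀ b hlog.ne']⟩))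
        refine this.congr fun p => ?_
        simp [Function.comp, Real.rpow_one]
      have h2 := h1.atTop_mul_const hlog
      refine (h2.congr' ?_)
      filter_upwards [eventually_gt_atTop 0] with p hp
      rw [Real.rpow_def_of_pos (by positivity : (0:ℝ) < |x|/μ)]
      field_simp
    have hnum : Tendsto (fun p : ℝ => Real.exp (-(|x| ^ p) / (p * μ ^ p))) atTop (nhds 0) := by
      have : Tendsto (fun p : ℝ => Real.exp (-((|x| / μ) ^ p / p))) atTop (nhds 0) :=
        Real.tendsto_exp_atBot.comp (tendsto_neg_atBot_iff.mpr hA)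
      have heq : (fun p : ℝ => Real.exp (-(|x| ^ p) / (p * μ ^ p))) =ᶠ[atTop]
          (fun p : ℝ => Real.exp (-((|x| / μ) ^ p / p))) :=
        hargeq.mono fun p hp => by simp only [hp]
      exact this.congr' heq.symm
    have := hnum.div hden (by positivity)
    simpa [Pi.div_def] using this
end
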